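/- For all integers n ≥ 4, the number of internal triangles satisfies (n+2)*C_{n-1} - 2*C_n = 2 * binomial(2n-3, n-4), where C_m denotes the m-th Catalan number. -/

import Mathlib

/-- The m-th Catalan number as a rational: binomial(2m, m)/(m+1). -/
def catalanQ (m : ℕ) : ℚ := (Nat.choose (2 * m) m : ℚ) / (m + 1)

lemma catalan_aux (k : ℕ) :
    ((k:ℚ) + 6) * catalanQ (k+3) - 2 * catalanQ (k+4)
      = 2 * ((2*k+5).choose k : ℚ) := by
  unfold catalanQ
  rw [Nat.cast_choose ℚ (show k+3 ≤ 2*(k+3) by omega),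
      Nat.cast_choose ℚ (show k+4 ≤ 2*(k+4) by omega),
      Nat.cast_choose ℚ (show k ≤ 2*k+5 by omega),
      show 2*(k+3) - (k+3) = k+3 by omega,
      show 2*(k+4) - (k+4) = k+4 by omega,
      show 2*k+5 - k = k+5 by omega,
      show 2*(k+3) = (2*k+5)+1 by omega,
      show 2*(k+4) = (2*k+5)+1+1+1 by omega]
  have F : ∀ m : ℕ, (((m+1).factorial : ℚ)) = (m+1) * ((m.factorial : ℚ)) := by
    intro m; push_cast [Nat.factorial_succ]; ring
  rw [F (2*k+5+1+1), F (2*k+5+1), F (2*k+5), F (k+4), F (k+3), F (k+2), F (k+1), F k]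
  have h1 : (((2*k+5).factorial : ℚ)) ≠ 0 := by positivity
  have h2 : ((k.factorial : ℚ)) ≠ 0 := by positivity
  have h3 : (k:ℚ) + 1 ≠ 0 := by positivity
  have h4 : (k:ℚ) + 2 ≠ 0 := by positivity
  have h5 : (k:ℚ) + 3 ≠ 0 := by positivity
  have h6 : (k:ℚ) + 4 ≠ 0 := by positivity
  have h7 : (k:ℚ) + 5 ≠ 0 := by positivity
  field_simp
  push_cast
  ring

theorem internal_triangles_formula (n : ℕ) (hn : 4 ≤ n) :
    ((n : ℚ) + 2) * catalanQ (n - 1) - 2 * catalanQ n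
      = 2 * (Nat.choose (2 * n - 3) (n - 4) : ℚ) := by
  obtain ⟨k, rfl⟩ := Nat.exists_eq_add_of_le hn
  have h1 : 4 + k - 1 = k + 3 := by omega
  have h2 : 4 + k = k + 4 := by omega
  have h3 : 2 * (4 + k) - 3 = 2 * k + 5 := by omega
  have h4 : 4 + k - 4 = k := by omega
  rw [h1, h3, h4, h2]
  have := catalan_aux k
  push_cast
  push_cast at this
  linarith
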